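/- For every u ∈ ℝ and ε ≥ 0, |f_ε(u) - f_0(u)| ≤ ε · |u|^{2^*-1} · ln ln(e + |u|), where f_ε(u) = |u|^{2^*-2} u / [ln(e+|u|)]^ε and 2^* = 2N/(N-2) for an integer N ≥ 3. -/

import Mathlib

open Real

/-- `f_ε(u) = |u|^{2^*-2} u / [ln(e+|u|)]^ε` with `2^* = 2N/(N-2)`. -/
noncomputable def fEps (N : ℕ) (ε u : ℝ) : ℝ :=
  |u| ^ (2 * (N : ℝ) / ((N : ℝ) - 2) - 2) * u / (Real.log (Real.exp 1 + |u|)) ^ ε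

theorem stmt0 (N : ℕ) (hN : 3 ≤ N) (u ε : ℝ) (hε : 0 ≤ ε) :
    |fEps N ε u - fEps N 0 u| ≤
      ε * |u| ^ (2 * (N : ℝ) / ((N : ℝ) - 2) - 1) *
        Real.log (Real.log (Real.exp 1 + |u|)) := by
  rcases eq_or_ne u 0 with rfl | hu
  · simp [fEps]
  set L := Real.log (Real.exp 1 + |u|) with hLdef
  have hL1 : 1 ≤ L := by
    rw [hLdef]
    calc (1:ℝ) = Real.log (Real.exp 1) := (Real.log_exp 1).symm
    _ ≤ _ := Real.log_le_log (Real.exp_pos 1) (le_add_of_nonneg_right (abs_nonneg u))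
  have hLpos : (0:ℝ) < L := lt_of_lt_of_le one_pos hL1
  have hlogL : 0 ≤ Real.log L := Real.log_nonneg hL1
  have hLe1 : (1:ℝ) ≤ L ^ ε := Real.one_le_rpow hL1 hε
  have hLepos : (0:ℝ) < L ^ ε := lt_of_lt_of_le one_pos hLe1
  have hupos : (0:ℝ) < |u| := abs_pos.mpr hu
  set p : ℝ := 2 * (N : ℝ) / ((N : ℝ) - 2)
  have habs : |u| ^ (p - 2) * |u| = |u| ^ (p - 1) := by
    rw [← Real.rpow_add_one (ne_of_gt hupos)]
    ring_nf
  have hkey : 1 - 1 / L ^ ε ≤ ε * Real.log L := by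
    have h1 : L ^ ε = Real.exp (Real.log L * ε) := Real.rpow_def_of_pos hLpos ε
    have h2 : 1 / L ^ ε = Real.exp (-(Real.log L * ε)) := by
      rw [h1, Real.exp_neg]; exact (one_div _)
    have h3 := Real.add_one_le_exp (-(Real.log L * ε))
    rw [h2]; nlinarith
  have hLHS : |fEps N ε u - fEps N 0 u| = |u| ^ (p - 1) * (1 - 1 / L ^ ε) := by
    have : fEps N ε u - fEps N 0 u = (|u| ^ (p - 2) * u) * (1 / L ^ ε - 1) := by
      simp only [fEps, ← hLdef, Real.rpow_zero, div_one]
      change |u| ^ (p - 2) * u / L ^ ε - |u| ^ (p - 2) * u = _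
      field_simp
    rw [this, abs_mul, abs_mul, abs_of_nonneg (Real.rpow_nonneg (abs_nonneg u) _),
      habs]
    congr 1
    rw [abs_of_nonpos (by
      have : 1 / L ^ ε ≤ 1 := (div_le_one hLepos).mpr hLe1
      linarith)]
    ring
  rw [hLHS]
  calc |u| ^ (p - 1) * (1 - 1 / L ^ ε) ≤ |u| ^ (p - 1) * (ε * Real.log L) :=
        mul_le_mul_of_nonneg_left hkey (Real.rpow_nonneg (abs_nonneg u) _)
    _ = ε * |u| ^ (p - 1) * Real.log L := by ring
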